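/- Under the subcritical assumptions (ε regularly varying with index -α, α ∈ [0,1], ε_n → 0 if α = 0, nε_n/log n → ∞ if α = 1), with a_n = n + Σ_{i≤n} ε_i^{-1}, c_n = min{i : a_i ≥ n}, b_n = ε_{c_n}^{-1}, one has n/(b_n² log b_n) → ∞ and c_n²/(n log b_n) → ∞ as n → ∞. -/

import Mathlib

open Filter Real MeasureTheory
open scoped ENNReal

private lemma aux_slow (l : ℕ → ℝ) (hpos : ∀ n, 1 ≤ n → 0 < l n)
    (hhalf : Tendsto (fun n => l (n / 2) / l n) atTop (nhds 1)) :
    Tendsto (fun n => Real.log (l n) / Real.log n) atTop (nhds 0) := by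
  rw [Metric.tendsto_atTop]
  intro ε hε
  set ε' : ℝ := ε * Real.log 2 / 4 with hε'def
  have hlog2 : (0:ℝ) < Real.log 2 := Real.log_pos (by norm_num)
  have hε' : 0 < ε' := by positivity
  -- get N such that the half-step increments are ≤ ε'
  have hlograt : Tendsto (fun n => Real.log (l (n / 2) / l n)) atTop (nhds 0) := by
    have := (Real.continuousAt_log one_ne_zero).tendsto.comp hhalf
    simpa [Function.comp_def] using this
  have hev : ∀ᶠ n in atTop, |Real.log (l (n / 2) / l n)| ≤ ε' := by
    have := hlograt.eventually (Metric.ball_mem_nhds 0 hε')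
    filter_upwards [this] with n hn
    simpa [Real.dist_eq] using hn.le
  obtain ⟨N₀, hN₀⟩ := hev.exists_forall_of_atTop
  set N := max N₀ 2 with hNdef
  have hN2 : 2 ≤ N := le_max_right _ _
  have hstep : ∀ n, N ≤ n → |Real.log (l (n / 2)) - Real.log (l n)| ≤ ε' := by
    intro n hn
    have h2 : 2 ≤ n := le_trans hN2 hn
    have h1 : 1 ≤ n / 2 := Nat.one_le_div_iff (by norm_num) |>.mpr h2
    have := hN₀ n (le_trans (le_max_left _ _) hn)
    rwa [Real.log_div (ne_of_gt (hpos _ h1)) (ne_of_gt (hpos _ (by omega)))] at this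
  set C : ℝ := (Finset.Icc N (2 * N)).sup' (by simp; omega) (fun i => |Real.log (l i)|) with hCdef
  have hC0 : 0 ≤ C := le_trans (abs_nonneg (Real.log (l N)))
    (Finset.le_sup' (f := fun i => |Real.log (l i)|) (by simp; omega : N ∈ Finset.Icc N (2*N)))
  have key : ∀ n, N ≤ n → |Real.log (l n)| ≤ C + ε' * (Real.log n - Real.log N) / Real.log 2 := by
    intro n
    induction n using Nat.strong_induction_on with
    | _ n ih =>
      intro hn
      have hlogN : Real.log N ≤ Real.log n := by
        apply Real.log_le_log (by positivity) (by exact_mod_cast hn)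
      by_cases hcase : n ≤ 2 * N
      · have hmem : |Real.log (l n)| ≤ C :=
          Finset.le_sup' (f := fun i => |Real.log (l i)|) (show n ∈ Finset.Icc N (2*N) by simp; omega)
        have : (0:ℝ) ≤ ε' * (Real.log n - Real.log N) / Real.log 2 := by
          apply div_nonneg (mul_nonneg hε'.le (by linarith)) hlog2.le
        linarith
      · push_neg at hcase
        have hhalfN : N ≤ n / 2 := by omega
        have hlt : n / 2 < n := by omega
        have ih2 := ih (n / 2) hlt hhalfN
        have htri : |Real.log (l n)| ≤ |Real.log (l (n / 2))| + ε' := by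
          have := hstep n hn
          have := abs_sub_abs_le_abs_sub (Real.log (l n)) (Real.log (l (n/2)))
          rw [abs_sub_comm] at this
          linarith [abs_sub_comm (Real.log (l (n/2))) (Real.log (l n))]
        have hhpos : (0:ℝ) < ((n / 2 : ℕ) : ℝ) := by
          have : 1 ≤ n / 2 := by omega
          exact_mod_cast Nat.lt_of_lt_of_le Nat.zero_lt_one this
        have hloghalf : Real.log ((n / 2 : ℕ) : ℝ) + Real.log 2 ≤ Real.log n := by
          rw [← Real.log_mul (ne_of_gt hhpos) (by norm_num)]
          apply Real.log_le_log (by positivity)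
          have : (n / 2) * 2 ≤ n := Nat.div_mul_le_self n 2
          exact_mod_cast this
        have hmul : ε' * Real.log ((n/2:ℕ):ℝ) + ε' * Real.log 2 ≤ ε' * Real.log n := by
          nlinarith [mul_le_mul_of_nonneg_left hloghalf hε'.le]
        have : ε' * (Real.log ((n/2:ℕ):ℝ) - Real.log N) / Real.log 2 + ε'
            ≤ ε' * (Real.log n - Real.log N) / Real.log 2 := by
          rw [div_add' _ _ _ (ne_of_gt hlog2), div_le_div_iff₀ hlog2 hlog2]
          nlinarith [mul_le_mul_of_nonneg_right
            (show ε' * (Real.log ((n/2:ℕ):ℝ) - Real.log N) + ε' * Real.log 2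
              ≤ ε' * (Real.log n - Real.log N) by linarith) hlog2.le]
        linarith
  -- now conclude
  obtain ⟨M₀, hM₀⟩ : ∃ M₀ : ℕ, ∀ n ≥ M₀, Real.exp (2 * C / ε + 1) ≤ (n:ℝ) := by
    refine ⟨⌈Real.exp (2*C/ε + 1)⌉₊, fun n hn => ?_⟩
    exact le_trans (Nat.le_ceil _) (by exact_mod_cast hn)
  refine ⟨max N M₀, fun n hn => ?_⟩
  have hnN : N ≤ n := le_trans (le_max_left _ _) hn
  have hnM : M₀ ≤ n := le_trans (le_max_right _ _) hn
  have hexp := hM₀ n hnM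
  have hlogn : 2 * C / ε + 1 ≤ Real.log n := by
    rw [← Real.log_exp (2*C/ε + 1)]
    exact Real.log_le_log (Real.exp_pos _) hexp
  have hlogn1 : (1:ℝ) ≤ Real.log n := by
    have : (0:ℝ) ≤ 2 * C / ε := by positivity
    linarith
  have hlogn0 : (0:ℝ) < Real.log n := by linarith
  have hkey := key n hnN
  have hlogN : Real.log N ≤ Real.log n := by
    apply Real.log_le_log (by positivity) (by exact_mod_cast hnN)
  have hlogN0 : 0 ≤ Real.log N := Real.log_nonneg (by exact_mod_cast hN2.trans' (by norm_num) : (1:ℝ) ≤ N)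
  rw [Real.dist_eq, sub_zero, abs_div, abs_of_pos hlogn0]
  rw [div_lt_iff₀ hlogn0]
  have h1 : ε' * (Real.log n - Real.log N) / Real.log 2 ≤ (ε/4) * Real.log n := by
    rw [hε'def, div_le_iff₀ hlog2]
    have : Real.log n - Real.log N ≤ Real.log n := by linarith
    nlinarith [mul_le_mul_of_nonneg_left this (by positivity : (0:ℝ) ≤ ε * Real.log 2 / 4)]
  have h2 : C < (ε/2) * Real.log n := by
    have hm := mul_le_mul_of_nonneg_left hlogn hε.le
    have he : ε * (2 * C / ε) = 2 * C := by field_simp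
    rw [mul_add, he] at hm
    linarith
  calc |Real.log (l n)| ≤ C + ε' * (Real.log n - Real.log N) / Real.log 2 := hkey
    _ < (ε/2) * Real.log n + (ε/4) * Real.log n := by linarith
    _ ≤ ε * Real.log n := by nlinarith [hε.le, hlogn0.le]


private lemma aux_fatou (L : ℕ → ℝ) (hpos : ∀ n, 1 ≤ n → 0 < L n)
    (hrat : ∀ lam : ℝ, 0 < lam →
      Tendsto (fun n : ℕ => L ⌊lam * (n:ℝ)⌋₊ / L n) atTop (nhds 1)) :
    ∀ᶠ m : ℕ in atTop, (m:ℝ)/4 * L m ≤ ∑ i ∈ Finset.Icc (m/2) m, L i := by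
  set f : ℕ → ℝ → ℝ≥0∞ := fun m lam => ENNReal.ofReal (L ⌊lam * (m:ℝ)⌋₊ / L m) with hf
  have hmeas : ∀ m, Measurable (f m) := by
    intro m
    apply ENNReal.measurable_ofReal.comp
    exact (measurable_from_nat (f := fun k => L k / L m)).comp
      (Nat.measurable_floor.comp (measurable_id.mul_const _))
  set F : ℕ → ℝ≥0∞ := fun m => ∫⁻ lam in Set.Icc (1/2:ℝ) 1, f m lam with hF
  have hliminf : ENNReal.ofReal (1/2) ≤ liminf F atTop := by
    have hpt : ∀ lam ∈ Set.Icc (1/2:ℝ) 1, liminf (fun m => f m lam) atTop = 1 := by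
      intro lam hlam
      have hl0 : 0 < lam := lt_of_lt_of_le (by norm_num) hlam.1
      have := (ENNReal.tendsto_ofReal (hrat lam hl0))
      simpa using this.liminf_eq
    have hle := lintegral_liminf_le' (u := atTop) (μ := volume.restrict (Set.Icc (1/2:ℝ) 1))
      (fun m => (hmeas m).aemeasurable)
    refine le_trans ?_ hle
    have : ∫⁻ lam in Set.Icc (1/2:ℝ) 1, (1:ℝ≥0∞)
        ≤ ∫⁻ lam in Set.Icc (1/2:ℝ) 1, liminf (fun m => f m lam) atTop := by
      apply setLIntegral_mono_ae ?_ ?_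
      · exact (Measurable.liminf fun m => hmeas m).aemeasurable
      · exact ae_of_all _ fun lam hlam => le_of_eq (hpt lam hlam).symm
    refine le_trans ?_ this
    rw [setLIntegral_one, Real.volume_Icc]
    norm_num
  have hev : ∀ᶠ m in atTop, ENNReal.ofReal (1/4) < F m := by
    apply eventually_lt_of_lt_liminf (hu := ⟨0, by simp⟩)
    refine lt_of_lt_of_le ?_ hliminf
    rw [ENNReal.ofReal_lt_ofReal_iff (by norm_num)]
    norm_num
  filter_upwards [hev, eventually_ge_atTop 2] with m hm hm2
  -- step: F m ≤ sum
  have hmpos : (0:ℝ) < (m:ℝ) := by positivity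
  have hLm : 0 < L m := hpos m (by omega)
  set s : Finset ℕ := Finset.Icc (m/2) m with hs
  set G : ℝ → ℝ≥0∞ := fun lam => ∑ i ∈ s,
    (Set.Ico ((i:ℝ)/m) (((i:ℝ)+1)/m)).indicator (fun _ => ENNReal.ofReal (L i / L m)) lam with hG
  have hptle : ∀ lam ∈ Set.Icc (1/2:ℝ) 1, f m lam ≤ G lam := by
    intro lam hlam
    set i₀ := ⌊lam * (m:ℝ)⌋₊ with hi₀
    have hlm0 : (0:ℝ) ≤ lam * m := by
      have := hlam.1; nlinarith
    have hmem : i₀ ∈ s := by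
      rw [hs, Finset.mem_Icc]
      constructor
      · have h1 : ((m:ℝ)/2) ≤ lam * m := by have := hlam.1; nlinarith
        have h2 : ⌊(m:ℝ)/(2:ℕ)⌋₊ ≤ i₀ := by
          rw [hi₀]; exact Nat.floor_mono (by exact_mod_cast h1)
        rwa [Nat.floor_div_natCast, Nat.floor_natCast] at h2
      · have h1 : lam * m ≤ ((m:ℕ):ℝ) := by have := hlam.2; nlinarith
        have := Nat.floor_mono h1
        rwa [Nat.floor_natCast] at this
    have hin : lam ∈ Set.Ico ((i₀:ℝ)/m) (((i₀:ℝ)+1)/m) := by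
      constructor
      · rw [div_le_iff₀ hmpos]; exact Nat.floor_le hlm0
      · rw [lt_div_iff₀ hmpos]; exact Nat.lt_floor_add_one _
    have hval : f m lam = (Set.Ico ((i₀:ℝ)/(m:ℝ)) (((i₀:ℝ)+1)/(m:ℝ))).indicator
        (fun _ => ENNReal.ofReal (L i₀ / L m)) lam := (Set.indicator_of_mem hin _).symm
    rw [hval]
    exact Finset.single_le_sum (f := fun i : ℕ =>
      (Set.Ico ((i:ℝ)/(m:ℝ)) (((i:ℝ)+1)/(m:ℝ))).indicator
        (fun _ => ENNReal.ofReal (L i / L m)) lam)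
      (fun i _ => bot_le) hmem
  have hFle : F m ≤ ∑ i ∈ s, ENNReal.ofReal (L i / L m) * ENNReal.ofReal (1/m) := by
    have h1 : F m ≤ ∫⁻ lam in Set.Icc (1/2:ℝ) 1, G lam := by
      apply setLIntegral_mono (Finset.measurable_sum s
        (fun i _ => measurable_const.indicator measurableSet_Ico)) hptle
    have h2 : ∫⁻ lam in Set.Icc (1/2:ℝ) 1, G lam ≤ ∫⁻ lam, G lam := setLIntegral_le_lintegral _ _
    have h3 : ∫⁻ lam, G lam = ∑ i ∈ s, ENNReal.ofReal (L i / L m) * ENNReal.ofReal (1/m) := by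
      rw [hG, lintegral_finset_sum s (fun i _ => measurable_const.indicator measurableSet_Ico)]
      apply Finset.sum_congr rfl
      intro i _
      rw [lintegral_indicator measurableSet_Ico, setLIntegral_const, Real.volume_Ico]
      congr 1
      rw [div_sub_div_same]
      congr 1
      ring
    exact h1.trans (h2.trans_eq h3)
  have hnn : ∀ i ∈ s, (0:ℝ) ≤ L i / L m * (1/m) := by
    intro i hi
    rw [hs, Finset.mem_Icc] at hi
    have : 0 < L i := hpos i (by omega)
    positivity
  have hsum : ENNReal.ofReal (1/4) ≤ ENNReal.ofReal (∑ i ∈ s, L i / L m * (1/m)) := by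
    calc ENNReal.ofReal (1/4) ≤ F m := hm.le
      _ ≤ _ := hFle
      _ = _ := by
        rw [ENNReal.ofReal_sum_of_nonneg hnn]
        apply Finset.sum_congr rfl
        intro i hi
        have : 0 < L i := hpos i (by rw [hs, Finset.mem_Icc] at hi; omega)
        exact (ENNReal.ofReal_mul (by positivity)).symm
  rw [ENNReal.ofReal_le_ofReal_iff (Finset.sum_nonneg hnn)] at hsum
  have heq : ∑ i ∈ s, L i / L m * (1/m) = (∑ i ∈ s, L i) / (L m * m) := by
    rw [Finset.sum_div]
    apply Finset.sum_congr rfl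
    intro i _
    rw [div_mul_div_comm, mul_one]
  rw [heq, le_div_iff₀ (by positivity)] at hsum
  calc (m:ℝ)/4 * L m = 1/4 * (L m * m) := by ring
    _ ≤ ∑ i ∈ s, L i := hsum


/-- A sequence `(r_n)_{n ≥ 1}` of positive reals is regularly varying with index `ρ`
if `r n = n^ρ * ℓ n` with `ℓ` slowly varying: `ℓ ⌊λn⌋ / ℓ n → 1` for all `λ > 0`. -/
def RVSeq (r : ℕ → ℝ) (ρ : ℝ) : Prop :=
  (∀ n, 1 ≤ n → 0 < r n) ∧
  ∃ l : ℕ → ℝ, (∀ n, 1 ≤ n → r n = (n : ℝ) ^ ρ * l n) ∧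
    ∀ lam : ℝ, 0 < lam →
      Filter.Tendsto (fun n : ℕ => l ⌊lam * (n : ℝ)⌋₊ / l n) Filter.atTop (nhds 1)

set_option maxHeartbeats 1000000 in
/-- The subcritical assumptions and the derived sequences `a`, `c`, `b`:
`ε` takes values in `(0,1)`, is regularly varying with index `-α` for `α ∈ [0,1]`,
`ε_n → 0` if `α = 0`, and `nε_n / log n → ∞` if `α = 1`;
`a_n = n + Σ_{i≤n} 1/ε_i`, `c_n = min{i : a_i ≥ n}`, `b_n = 1/ε_{c_n}`. -/
theorem subcritical_scale_comparison (α : ℝ) (hα0 : 0 ≤ α) (hα1 : α ≤ 1)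
    (ε : ℕ → ℝ) (hε01 : ∀ n, 1 ≤ n → ε n ∈ Set.Ioo (0 : ℝ) 1)
    (hrv : RVSeq ε (-α))
    (h0 : α = 0 → Filter.Tendsto ε Filter.atTop (nhds 0))
    (h1 : α = 1 →
      Filter.Tendsto (fun n : ℕ => (n : ℝ) * ε n / Real.log n) Filter.atTop Filter.atTop)
    (a : ℕ → ℝ) (b : ℕ → ℝ) (c : ℕ → ℕ)
    (ha : ∀ n, a n = (n : ℝ) + ∑ i ∈ Finset.Icc 1 n, (ε i)⁻¹)
    (hc : ∀ n, c n = sInf {i : ℕ | (n : ℝ) ≤ a i})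
    (hb : ∀ n, b n = (ε (c n))⁻¹) :
    Filter.Tendsto (fun n : ℕ => (n : ℝ) / (b n ^ 2 * Real.log (b n)))
        Filter.atTop Filter.atTop ∧
      Filter.Tendsto (fun n => (c n : ℝ) ^ 2 / ((n : ℝ) * Real.log (b n)))
        Filter.atTop Filter.atTop := by
  obtain ⟨hεpos, l, hl, hslow⟩ := hrv
  set L : ℕ → ℝ := fun n => (l n)⁻¹ with hLdef
  -- basic positivity
  have hlpos : ∀ n, 1 ≤ n → 0 < l n := by
    intro n hn
    have h := hl n hn
    have hε := (hε01 n hn).1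
    have hnp : (0:ℝ) < (n:ℝ) ^ (-α) := Real.rpow_pos_of_pos (by exact_mod_cast hn) _
    nlinarith [h ▸ hε]
  have hLpos : ∀ n, 1 ≤ n → 0 < L n := fun n hn => inv_pos.mpr (hlpos n hn)
  have hεinv : ∀ n, 1 ≤ n → (ε n)⁻¹ = (n:ℝ) ^ (α:ℝ) * L n := by
    intro n hn
    rw [hl n hn, Real.rpow_neg (by positivity), mul_inv, inv_inv]
  have hr1 : ∀ n, 1 ≤ n → 1 < (ε n)⁻¹ := by
    intro n hn
    have h := hε01 n hn
    rw [lt_inv_comm₀ one_pos h.1]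
    simpa using h.2
  have hlogr : ∀ n, 1 ≤ n → 0 < Real.log ((ε n)⁻¹) := fun n hn => Real.log_pos (hr1 n hn)
  have hεinvpos : ∀ n, 1 ≤ n → 0 < (ε n)⁻¹ := fun n hn => inv_pos.mpr (hε01 n hn).1
  -- the log-ratio limits
  have hfl : ∀ n : ℕ, ⌊(1/2:ℝ) * (n:ℝ)⌋₊ = n / 2 := by
    intro n
    rw [one_div, inv_mul_eq_div, show (2:ℝ) = ((2:ℕ):ℝ) by norm_num, Nat.floor_div_natCast,
      Nat.floor_natCast]
  have hl_half : Tendsto (fun n => l (n / 2) / l n) atTop (nhds 1) := by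
    refine Tendsto.congr (fun n => by rw [hfl]) (hslow (1/2) (by norm_num))
  have hTl := aux_slow l hlpos hl_half
  have hTL : Tendsto (fun n : ℕ => Real.log (L n) / Real.log n) atTop (nhds 0) := by
    have heq : ∀ n : ℕ, Real.log (L n) / Real.log n = -(Real.log (l n) / Real.log n) := by
      intro n; rw [hLdef]; rw [Real.log_inv, neg_div]
    rw [show (0:ℝ) = -0 by norm_num]
    exact Tendsto.congr (fun n => (heq n).symm) hTl.neg
  have hLub : ∀ δ : ℝ, 0 < δ → ∀ᶠ n : ℕ in atTop, L n ≤ (n:ℝ) ^ (δ:ℝ) := by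
    intro δ hδ
    have h1 := hTL.eventually_lt_const hδ
    filter_upwards [h1, eventually_ge_atTop 2] with n hn hn2
    have hlogn : (0:ℝ) < Real.log n := Real.log_pos (by exact_mod_cast hn2)
    have : Real.log (L n) < δ * Real.log n := by
      rw [div_lt_iff₀ hlogn] at hn; linarith
    have hLn : 0 < L n := hLpos n (by omega)
    calc L n = Real.exp (Real.log (L n)) := (Real.exp_log hLn).symm
      _ ≤ Real.exp (δ * Real.log n) := Real.exp_le_exp.mpr this.le
      _ = (n:ℝ) ^ (δ:ℝ) := by
          rw [Real.rpow_def_of_pos (by positivity : (0:ℝ) < (n:ℝ))]; ring_nf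
  have hLlb : ∀ δ : ℝ, 0 < δ → ∀ᶠ n : ℕ in atTop, (n:ℝ) ^ (-δ) ≤ L n := by
    intro δ hδ
    have h1 := hTL.eventually_const_lt (show -δ < 0 by linarith)
    filter_upwards [h1, eventually_ge_atTop 2] with n hn hn2
    have hlogn : (0:ℝ) < Real.log n := Real.log_pos (by exact_mod_cast hn2)
    have : -δ * Real.log n < Real.log (L n) := by
      rw [lt_div_iff₀ hlogn] at hn; linarith
    have hLn : 0 < L n := hLpos n (by omega)
    calc (n:ℝ) ^ (-δ) = Real.exp (-δ * Real.log n) := by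
          rw [Real.rpow_def_of_pos (by positivity : (0:ℝ) < (n:ℝ))]; ring_nf
      _ ≤ Real.exp (Real.log (L n)) := Real.exp_le_exp.mpr this.le
      _ = L n := Real.exp_log hLn
  -- the key little-o limit
  have hnatcast : Tendsto (fun n : ℕ => (n:ℝ)) atTop atTop := tendsto_natCast_atTop_atTop
  have hG : Tendsto (fun n : ℕ => (n:ℝ) ^ (α - 1) * L n * Real.log n) atTop (nhds 0) := by
    rcases eq_or_lt_of_le hα1 with hαe | hαlt
    · -- α = 1
      subst hαe
      have h1' := h1 rfl
      have h2 := h1'.inv_tendsto_atTop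
      refine Tendsto.congr' ?_ h2
      filter_upwards [eventually_ge_atTop 2] with n hn
      have hn1 : (1:ℕ) ≤ n := by omega
      have hlogn : (0:ℝ) < Real.log n := Real.log_pos (by exact_mod_cast hn)
      have hεn : 0 < ε n := (hε01 n hn1).1
      have hnp : (0:ℝ) < (n:ℝ) := by positivity
      have hln : l n = (n:ℝ) * ε n := by
        rw [hl n hn1, Real.rpow_neg_one]
        field_simp
      rw [Pi.inv_apply, show ((1:ℝ) - 1) = 0 by norm_num, Real.rpow_zero, one_mul]
      show ((n:ℝ) * ε n / Real.log n)⁻¹ = (l n)⁻¹ * Real.log n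
      rw [hln, inv_div, ← div_eq_inv_mul]
    · -- α < 1
      set δ := (1 - α)/2 with hδdef
      have hδ : 0 < δ := by rw [hδdef]; linarith
      have hbound : Tendsto (fun n : ℕ => (n:ℝ) ^ (-δ) * Real.log n) atTop (nhds 0) := by
        have hlo := (isLittleO_log_rpow_atTop hδ).tendsto_div_nhds_zero
        have := hlo.comp hnatcast
        refine Tendsto.congr ?_ this
        intro n
        simp only [Function.comp_apply]
        rw [Real.rpow_neg (by positivity)]
        rw [div_eq_mul_inv, mul_comm]
      apply squeeze_zero' (g := fun n : ℕ => (n:ℝ) ^ (-δ) * Real.log n)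
      · filter_upwards [eventually_ge_atTop 1] with n hn
        have := hLpos n hn
        have hlogn : (0:ℝ) ≤ Real.log n :=
          Real.log_nonneg (by exact_mod_cast hn)
        positivity
      · filter_upwards [hLub δ hδ, eventually_ge_atTop 1] with n hLn hn
        have hnp : (0:ℝ) < (n:ℝ) := by exact_mod_cast Nat.lt_of_lt_of_le Nat.zero_lt_one hn
        have hlogn : (0:ℝ) ≤ Real.log n := Real.log_nonneg (by exact_mod_cast hn)
        have h1' : (n:ℝ) ^ (α - 1) * L n ≤ (n:ℝ) ^ (α - 1) * (n:ℝ) ^ (δ:ℝ) :=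
          mul_le_mul_of_nonneg_left hLn (by positivity)
        have h2' : (n:ℝ) ^ (α - 1) * (n:ℝ) ^ (δ:ℝ) = (n:ℝ) ^ (-δ) := by
          rw [← Real.rpow_add hnp]
          congr 1
          rw [hδdef]; ring
        exact mul_le_mul_of_nonneg_right (h2' ▸ h1') hlogn
      · exact hbound
  -- log of 1/ε is at most 2 log n
  have hlogr2 : ∀ᶠ n : ℕ in atTop, Real.log ((ε n)⁻¹) ≤ 2 * Real.log n := by
    filter_upwards [hLub 1 one_pos, eventually_ge_atTop 2] with n hLn hn
    have hn1 : (1:ℕ) ≤ n := by omega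
    have hnp : (1:ℝ) ≤ (n:ℝ) := by exact_mod_cast hn1
    have hnp0 : (0:ℝ) < (n:ℝ) := by linarith
    have hle : (ε n)⁻¹ ≤ (n:ℝ) * (n:ℝ) := by
      rw [hεinv n hn1]
      have h1' : (n:ℝ) ^ (α:ℝ) ≤ (n:ℝ) := by
        calc (n:ℝ) ^ (α:ℝ) ≤ (n:ℝ) ^ (1:ℝ) := Real.rpow_le_rpow_of_exponent_le hnp hα1
          _ = (n:ℝ) := Real.rpow_one _
      have h2' : L n ≤ (n:ℝ) := by
        calc L n ≤ (n:ℝ) ^ (1:ℝ) := hLn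
          _ = (n:ℝ) := Real.rpow_one _
      have hLnn := hLpos n hn1
      exact mul_le_mul h1' h2' hLnn.le hnp0.le
    calc Real.log ((ε n)⁻¹) ≤ Real.log ((n:ℝ) * (n:ℝ)) :=
          Real.log_le_log (hεinvpos n hn1) hle
      _ = 2 * Real.log n := by rw [Real.log_mul (ne_of_gt hnp0) (ne_of_gt hnp0)]; ring
  -- epsilon inverse decomposition
  have hai : ∀ i : ℕ, 1 ≤ i → (ε i)⁻¹ = (i:ℝ) * ((i:ℝ) ^ (α - 1) * L i) := by
    intro i hi
    have hip : (0:ℝ) < (i:ℝ) := by exact_mod_cast Nat.lt_of_lt_of_le Nat.zero_lt_one hi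
    rw [hεinv i hi]
    rw [show (α:ℝ) = (α - 1) + 1 by ring, Real.rpow_add_one (ne_of_gt hip)]
    ring
  set g : ℕ → ℝ := fun i => (i:ℝ) ^ (α - 1) * L i with hgdef
  have hgpos : ∀ i, 1 ≤ i → 0 < g i := by
    intro i hi
    have hip : (0:ℝ) < (i:ℝ) := by exact_mod_cast Nat.lt_of_lt_of_le Nat.zero_lt_one hi
    have := hLpos i hi
    rw [hgdef]
    positivity
  have hlogdiv : Tendsto (fun m : ℕ => Real.log m / (m:ℝ)) atTop (nhds 0) := by
    have := (Real.isLittleO_log_id_atTop.tendsto_div_nhds_zero).comp hnatcast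
    exact this
  -- ######## the A estimate ########
  have hA0 : Tendsto (fun m : ℕ => a m * Real.log ((ε m)⁻¹) / (m:ℝ)^2) atTop (nhds 0) := by
    rw [NormedAddCommGroup.tendsto_nhds_zero]
    intro ε₀ hε₀
    set η := min (ε₀/32) 1 with hηdef
    have hη : 0 < η := lt_min (by positivity) one_pos
    have hη1 : η ≤ 1 := min_le_right _ _
    have hη32 : η ≤ ε₀/32 := min_le_left _ _
    -- threshold N for g i ≤ η / log i
    obtain ⟨N₁, hN₁⟩ := (hG.eventually_lt_const hη).exists_forall_of_atTop
    set N := max N₁ 3 with hNdef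
    have hN3 : 3 ≤ N := le_max_right _ _
    have hlog3 : ∀ i : ℕ, 3 ≤ i → 1 < Real.log i := by
      intro i hi
      have : (3:ℝ) ≤ (i:ℝ) := by exact_mod_cast hi
      calc (1:ℝ) < Real.log 3 := by
            rw [Real.lt_log_iff_exp_lt (by norm_num)]
            exact lt_trans Real.exp_one_lt_d9 (by norm_num)
        _ ≤ Real.log i := Real.log_le_log (by norm_num) this
    have hgsmall : ∀ i, N ≤ i → g i ≤ η / Real.log i := by
      intro i hi
      have hlogi : (1:ℝ) < Real.log i := hlog3 i (le_trans hN3 hi)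
      have h' : g i * Real.log i < η := by
        have := hN₁ i (le_trans (le_max_left _ _) hi)
        simpa [hgdef] using this
      rw [le_div_iff₀ (by linarith : (0:ℝ) < Real.log i)]
      linarith
    set Cc : ℝ := ∑ i ∈ Finset.Icc 1 N, (ε i)⁻¹ with hCcdef
    have hCc0 : 0 ≤ Cc := Finset.sum_nonneg fun i hi => by
      have : 1 ≤ i := (Finset.mem_Icc.mp hi).1
      exact (hεinvpos i this).le
    have h8ev : ∀ᶠ m : ℕ in atTop, 8 * (Real.log m / (m:ℝ)) < ε₀/2 :=
      (hlogdiv.const_mul 8).eventually_lt_const (by norm_num; positivity)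
    have hmain : ∀ᶠ m : ℕ in atTop, ‖a m * Real.log ((ε m)⁻¹) / (m:ℝ)^2‖ < ε₀ := by
      filter_upwards [eventually_ge_atTop (N*N), eventually_ge_atTop 16,
        eventually_ge_atTop (⌈Cc⌉₊ + 1), hlogr2, h8ev] with m hmNN hm16 hmCc hlog2m h8m
      have hm1 : (1:ℕ) ≤ m := by omega
      have hmp : (0:ℝ) < (m:ℝ) := by exact_mod_cast Nat.pos_of_ne_zero (by omega)
      have hterm : ∀ i : ℕ, N ≤ i → (ε i)⁻¹ ≤ (i:ℝ) * (η / Real.log i) := by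
        intro i hi
        rw [hai i (by omega)]
        exact mul_le_mul_of_nonneg_left (hgsmall i hi) (Nat.cast_nonneg i)
      set K := Nat.sqrt m with hKdef
      have hKN : N ≤ K := Nat.le_sqrt.mpr hmNN
      have hKm : K ≤ m := Nat.sqrt_le_self m
      have hKKm : K * K ≤ m := by have h' := Nat.sqrt_le' m; rwa [pow_two] at h'
      have hK3 : 3 ≤ K := le_trans hN3 hKN
      have hlogm : (0:ℝ) < Real.log m := by
        have := hlog3 m (by omega); linarith
      have hsqrt2 : (2:ℝ) ≤ Real.sqrt m := by
        rw [show (2:ℝ) = Real.sqrt 4 by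
          rw [show (4:ℝ) = 2^2 by norm_num, Real.sqrt_sq (by norm_num)]]
        exact Real.sqrt_le_sqrt (by exact_mod_cast le_trans (by norm_num : (4:ℕ) ≤ 16) hm16)
      have hKr : Real.sqrt m < (K:ℝ) + 1 := by
        rw [Real.sqrt_lt' (by positivity)]
        have hh := Nat.lt_succ_sqrt' m
        rw [pow_two, Nat.succ_eq_add_one] at hh
        have h' : (m:ℝ) < ((K:ℝ)+1) * ((K:ℝ)+1) := by exact_mod_cast hh
        nlinarith
      have hKhalf : Real.sqrt m / 2 ≤ (K:ℝ) := by linarith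
      have hlogK : Real.log m / 4 ≤ Real.log K := by
        have h16 : Real.log 16 ≤ Real.log m :=
          Real.log_le_log (by norm_num) (by exact_mod_cast hm16)
        have h16' : Real.log 16 = 4 * Real.log 2 := by
          rw [show (16:ℝ) = 2^(4:ℕ) by norm_num, Real.log_pow]; norm_num
        have hstep : Real.log (Real.sqrt m / 2) ≤ Real.log K :=
          Real.log_le_log (by positivity) hKhalf
        rw [Real.log_div (by positivity) (by norm_num), Real.log_sqrt hmp.le] at hstep
        linarith
      -- split the sum
      have hsplit : ∑ i ∈ Finset.Icc 1 m, (ε i)⁻¹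
          = (∑ i ∈ Finset.Ico 1 (N+1), (ε i)⁻¹) + (∑ i ∈ Finset.Ico (N+1) (K+1), (ε i)⁻¹)
            + ∑ i ∈ Finset.Ico (K+1) (m+1), (ε i)⁻¹ := by
        rw [← Finset.Ico_add_one_right_eq_Icc]
        rw [← Finset.sum_Ico_consecutive _ (show 1 ≤ N+1 by omega) (show N+1 ≤ m+1 by omega)]
        rw [← Finset.sum_Ico_consecutive _ (show N+1 ≤ K+1 by omega) (show K+1 ≤ m+1 by omega)]
        ring
      have hT1 : ∑ i ∈ Finset.Ico 1 (N+1), (ε i)⁻¹ = Cc := by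
        rw [Finset.Ico_add_one_right_eq_Icc]
      have hT2 : ∑ i ∈ Finset.Ico (N+1) (K+1), (ε i)⁻¹ ≤ η * m := by
        have hb : ∀ i ∈ Finset.Ico (N+1) (K+1), (ε i)⁻¹ ≤ η * K := by
          intro i hi
          rw [Finset.mem_Ico] at hi
          have hiN : N ≤ i := by omega
          have hlogi := hlog3 i (by omega)
          calc (ε i)⁻¹ ≤ (i:ℝ) * (η / Real.log i) := hterm i hiN
            _ ≤ (K:ℝ) * η := by
                have hik : (i:ℝ) ≤ (K:ℝ) := by exact_mod_cast (by omega : i ≤ K)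
                have hd : η / Real.log i ≤ η := div_le_self hη.le (by linarith)
                have h0' : 0 ≤ η / Real.log i := div_nonneg hη.le (by linarith)
                exact mul_le_mul hik hd h0' (Nat.cast_nonneg K)
            _ = η * K := by ring
        calc ∑ i ∈ Finset.Ico (N+1) (K+1), (ε i)⁻¹
            ≤ (Finset.Ico (N+1) (K+1)).card • (η * (K:ℝ)) := Finset.sum_le_card_nsmul _ _ _ hb
          _ = ((Finset.Ico (N+1) (K+1)).card : ℝ) * (η * K) := by rw [nsmul_eq_mul]
          _ ≤ (K:ℝ) * (η * K) := by
              have hcard : ((Finset.Ico (N+1) (K+1)).card : ℝ) ≤ (K:ℝ) := by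
                have h' : (Finset.Ico (N+1) (K+1)).card ≤ K := by
                  rw [Nat.card_Ico]; omega
                exact_mod_cast h'
              exact mul_le_mul_of_nonneg_right hcard (mul_nonneg hη.le (Nat.cast_nonneg K))
          _ = η * ((K:ℝ) * K) := by ring
          _ ≤ η * m := by
              exact mul_le_mul_of_nonneg_left (by exact_mod_cast hKKm) hη.le
      have hT3 : ∑ i ∈ Finset.Ico (K+1) (m+1), (ε i)⁻¹ ≤ η * 4 * (m:ℝ)^2 / Real.log m := by
        have hb : ∀ i ∈ Finset.Ico (K+1) (m+1), (ε i)⁻¹ ≤ (m:ℝ) * (η / (Real.log m / 4)) := by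
          intro i hi
          rw [Finset.mem_Ico] at hi
          have hiN : N ≤ i := by omega
          have hlogi : Real.log m / 4 ≤ Real.log i := by
            refine le_trans hlogK (Real.log_le_log (by positivity) ?_)
            exact_mod_cast (by omega : K ≤ i)
          have hlogi0 : (0:ℝ) < Real.log i := lt_of_lt_of_le (by linarith) hlogi
          calc (ε i)⁻¹ ≤ (i:ℝ) * (η / Real.log i) := hterm i hiN
            _ ≤ (m:ℝ) * (η / (Real.log m / 4)) := by
                have him : (i:ℝ) ≤ (m:ℝ) := by exact_mod_cast (by omega : i ≤ m)
                have hd : η / Real.log i ≤ η / (Real.log m / 4) := by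
                  rw [div_le_div_iff₀ hlogi0 (by linarith : (0:ℝ) < Real.log m / 4)]
                  exact mul_le_mul_of_nonneg_left hlogi hη.le
                exact mul_le_mul him hd (div_nonneg hη.le hlogi0.le) hmp.le
        calc ∑ i ∈ Finset.Ico (K+1) (m+1), (ε i)⁻¹
            ≤ (Finset.Ico (K+1) (m+1)).card • ((m:ℝ) * (η / (Real.log m / 4))) :=
              Finset.sum_le_card_nsmul _ _ _ hb
          _ = ((Finset.Ico (K+1) (m+1)).card : ℝ) * ((m:ℝ) * (η / (Real.log m / 4))) := by
              rw [nsmul_eq_mul]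
          _ ≤ (m:ℝ) * ((m:ℝ) * (η / (Real.log m / 4))) := by
              have hcard : ((Finset.Ico (K+1) (m+1)).card : ℝ) ≤ (m:ℝ) := by
                have h' : (Finset.Ico (K+1) (m+1)).card ≤ m := by
                  rw [Nat.card_Ico]; omega
                exact_mod_cast h'
              exact mul_le_mul_of_nonneg_right hcard
                (mul_nonneg hmp.le (div_nonneg hη.le (by linarith)))
          _ = η * 4 * (m:ℝ)^2 / Real.log m := by
              field_simp
      have hanonneg : 0 ≤ a m := by
        rw [ha m]
        have : 0 ≤ ∑ i ∈ Finset.Icc 1 m, (ε i)⁻¹ :=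
          Finset.sum_nonneg fun i hi => (hεinvpos i (Finset.mem_Icc.mp hi).1).le
        positivity
      have ham : a m ≤ (m:ℝ) + Cc + η * m + η * 4 * (m:ℝ)^2 / Real.log m := by
        rw [ha m, hsplit, hT1]
        linarith
      have hCcM : Cc ≤ (m:ℝ) := by
        calc Cc ≤ (⌈Cc⌉₊ : ℝ) := Nat.le_ceil _
          _ ≤ (m:ℝ) := by exact_mod_cast (by omega : ⌈Cc⌉₊ ≤ m)
      have hlogεm : 0 ≤ Real.log ((ε m)⁻¹) := (hlogr m hm1).le
      rw [Real.norm_eq_abs, abs_of_nonneg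
        (div_nonneg (mul_nonneg hanonneg hlogεm) (by positivity))]
      have hstep1 : a m * Real.log ((ε m)⁻¹) / (m:ℝ)^2
          ≤ ((m:ℝ) + Cc + η * m + η * 4 * (m:ℝ)^2 / Real.log m) * (2 * Real.log m) / (m:ℝ)^2 := by
        have hnum : a m * Real.log ((ε m)⁻¹)
            ≤ ((m:ℝ) + Cc + η * m + η * 4 * (m:ℝ)^2 / Real.log m) * (2 * Real.log m) :=
          mul_le_mul ham hlog2m hlogεm (le_trans hanonneg ham)
        exact (div_le_div_iff_of_pos_right (by positivity)).mpr hnum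
      have hstep2 : ((m:ℝ) + Cc + η * m + η * 4 * (m:ℝ)^2 / Real.log m) * (2 * Real.log m) / (m:ℝ)^2
          = ((m:ℝ) + Cc + η * m) * (2 * Real.log m) / (m:ℝ)^2 + 8 * η := by
        field_simp
        ring
      have hstep3 : ((m:ℝ) + Cc + η * m) * (2 * Real.log m) / (m:ℝ)^2
          ≤ 3 * (m:ℝ) * (2 * Real.log m) / (m:ℝ)^2 := by
        refine (div_le_div_iff_of_pos_right (by positivity)).mpr ?_
        refine mul_le_mul_of_nonneg_right ?_ (by linarith : (0:ℝ) ≤ 2 * Real.log m)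
        nlinarith [hη1, hmp, hCcM]
      have hstep4 : 3 * (m:ℝ) * (2 * Real.log m) / (m:ℝ)^2 = 6 * (Real.log m / m) := by
        field_simp
        ring
      have hfin : 6 * (Real.log m / (m:ℝ)) ≤ 8 * (Real.log m / (m:ℝ)) := by
        have : 0 ≤ Real.log m / (m:ℝ) := by positivity
        linarith
      have h8η : 8 * η ≤ ε₀ / 4 := by linarith
      calc a m * Real.log ((ε m)⁻¹) / (m:ℝ)^2
          ≤ ((m:ℝ) + Cc + η * m) * (2 * Real.log m) / (m:ℝ)^2 + 8 * η := by
            rw [← hstep2]; exact hstep1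
        _ ≤ 6 * (Real.log m / m) + 8 * η := by rw [← hstep4]; linarith
        _ < ε₀/2 + ε₀/4 := by linarith
        _ < ε₀ := by linarith
    exact hmain
  -- A: m^2 / (a_m log r_m) → ∞
  have hapos : ∀ m : ℕ, 1 ≤ m → 0 < a m := by
    intro m hm
    rw [ha m]
    have h1' : 0 ≤ ∑ i ∈ Finset.Icc 1 m, (ε i)⁻¹ :=
      Finset.sum_nonneg fun i hi => (hεinvpos i (Finset.mem_Icc.mp hi).1).le
    have h2' : (0:ℝ) < m := by exact_mod_cast Nat.pos_of_ne_zero (by omega)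
    linarith
  have hA : Tendsto (fun m : ℕ => (m:ℝ)^2 / (a m * Real.log ((ε m)⁻¹))) atTop atTop := by
    have hposev : ∀ᶠ m : ℕ in atTop,
        a m * Real.log ((ε m)⁻¹) / (m:ℝ)^2 ∈ Set.Ioi (0:ℝ) := by
      filter_upwards [eventually_ge_atTop 1] with m hm
      have h2' := hlogr m hm
      have h3' : (0:ℝ) < (m:ℝ) := by exact_mod_cast Nat.pos_of_ne_zero (by omega)
      have := hapos m hm
      exact Set.mem_Ioi.mpr (by positivity)
    have htd := (tendsto_nhdsWithin_iff.mpr ⟨hA0, hposev⟩).inv_tendsto_nhdsGT_zero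
    refine Tendsto.congr ?_ htd
    intro m
    rw [Pi.inv_apply, inv_div]
  -- Fatou lower bound for sums of L
  have hLrat : ∀ lam : ℝ, 0 < lam →
      Tendsto (fun n : ℕ => L ⌊lam * (n:ℝ)⌋₊ / L n) atTop (nhds 1) := by
    intro lam hlam
    have h' := ((hslow lam hlam).inv₀ one_ne_zero)
    rw [inv_one] at h'
    refine Tendsto.congr ?_ h'
    intro n
    show (l ⌊lam * (n:ℝ)⌋₊ / l n)⁻¹ = L ⌊lam * (n:ℝ)⌋₊ / L n
    rw [hLdef]
    simp only [div_eq_mul_inv, mul_inv, inv_inv]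
  have hFat := aux_fatou L hLpos hLrat
  -- B: a_(m-1) / (r_m^2 log r_m) → ∞
  have hgr0 : Tendsto (fun m : ℕ => 24 * (g m * Real.log ((ε m)⁻¹))) atTop (nhds 0) := by
    rw [show (0:ℝ) = 24 * 0 by norm_num]
    apply Tendsto.const_mul
    apply squeeze_zero' (g := fun m : ℕ => 2 * (g m * Real.log m))
    · filter_upwards [eventually_ge_atTop 1] with m hm
      exact mul_nonneg (hgpos m hm).le (hlogr m hm).le
    · filter_upwards [hlogr2, eventually_ge_atTop 1] with m h2 hm
      calc g m * Real.log ((ε m)⁻¹) ≤ g m * (2 * Real.log m) :=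
            mul_le_mul_of_nonneg_left h2 (hgpos m hm).le
        _ = 2 * (g m * Real.log m) := by ring
    · rw [show (0:ℝ) = 2 * 0 by norm_num]
      exact hG.const_mul 2
  have hEtop : Tendsto (fun m : ℕ => (24 * (g m * Real.log ((ε m)⁻¹)))⁻¹) atTop atTop := by
    apply Filter.Tendsto.inv_tendsto_nhdsGT_zero
    apply tendsto_nhdsWithin_iff.mpr ⟨hgr0, ?_⟩
    filter_upwards [eventually_ge_atTop 1] with m hm
    exact Set.mem_Ioi.mpr (mul_pos (by norm_num) (mul_pos (hgpos m hm) (hlogr m hm)))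
  have hB0 : Tendsto (fun m : ℕ => a (m-1) / (((ε m)⁻¹)^2 * Real.log ((ε m)⁻¹)))
      atTop atTop := by
    apply tendsto_atTop_mono' atTop ?_ hEtop
    filter_upwards [hFat, eventually_ge_atTop 48] with m hFm hm48
    obtain ⟨k, rfl⟩ : ∃ k, m = k + 1 := ⟨m - 1, by omega⟩
    rw [Nat.add_sub_cancel]
    have hm1 : 1 ≤ k + 1 := by omega
    set M : ℝ := ((k+1 : ℕ) : ℝ) with hMdef
    have hM48 : (48:ℝ) ≤ M := by rw [hMdef]; exact_mod_cast hm48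
    have hMpos : (0:ℝ) < M := by linarith
    have hY : 0 < L (k+1) := hLpos _ hm1
    set Y := L (k+1) with hYdef
    set X : ℝ := M ^ (α:ℝ) with hXdef
    have hX : 0 < X := Real.rpow_pos_of_pos hMpos _
    have hgm : 0 < g (k+1) := hgpos _ hm1
    have ht : 0 < Real.log ((ε (k+1))⁻¹) := hlogr _ hm1
    have hrX : (ε (k+1))⁻¹ = X * Y := hεinv _ hm1
    have hrg : (ε (k+1))⁻¹ = M * g (k+1) := hai _ hm1
    set h' : ℕ := (k+1)/2 with hh'def
    have hh1 : 1 ≤ h' := by omega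
    have hfatm : M/4 * Y ≤ ∑ i ∈ Finset.Icc h' (k+1), L i := hFm
    have hlowS : X/3 * (M/4 * Y) ≤ ∑ i ∈ Finset.Icc h' (k+1), (ε i)⁻¹ := by
      have hstep : ∀ i ∈ Finset.Icc h' (k+1), (X/3) * L i ≤ (ε i)⁻¹ := by
        intro i hi
        rw [Finset.mem_Icc] at hi
        have hi1 : 1 ≤ i := by omega
        rw [hεinv i hi1]
        refine mul_le_mul_of_nonneg_right ?_ (hLpos i hi1).le
        have hhi : (h':ℝ) ≤ (i:ℝ) := by exact_mod_cast hi.1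
        have hMh : M/3 ≤ (h':ℝ) := by
          have hn' : k+1 ≤ 3 * h' := by omega
          have hc' : M ≤ 3*(h':ℝ) := by rw [hMdef]; exact_mod_cast hn'
          linarith
        have h3α : (3:ℝ)^(α:ℝ) ≤ 3 := by
          calc (3:ℝ)^(α:ℝ) ≤ (3:ℝ)^(1:ℝ) :=
                Real.rpow_le_rpow_of_exponent_le (by norm_num) hα1
            _ = 3 := Real.rpow_one _
        have hM3 : (M/3 : ℝ)^(α:ℝ) ≤ (i:ℝ)^(α:ℝ) :=
          Real.rpow_le_rpow (by linarith) (by linarith) hα0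
        have hdr : (M/3 : ℝ)^(α:ℝ) = X / (3:ℝ)^(α:ℝ) := by
          rw [hXdef, Real.div_rpow hMpos.le (by norm_num)]
        have hfin : X/3 ≤ X / (3:ℝ)^(α:ℝ) := by
          rw [div_le_div_iff₀ (by norm_num) (Real.rpow_pos_of_pos (by norm_num) _)]
          exact mul_le_mul_of_nonneg_left h3α hX.le
        rw [hdr] at hM3
        linarith
      calc X/3 * (M/4 * Y) ≤ X/3 * ∑ i ∈ Finset.Icc h' (k+1), L i :=
            mul_le_mul_of_nonneg_left hfatm (by positivity)
        _ = ∑ i ∈ Finset.Icc h' (k+1), X/3 * L i := by rw [Finset.mul_sum]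
        _ ≤ ∑ i ∈ Finset.Icc h' (k+1), (ε i)⁻¹ := Finset.sum_le_sum hstep
    have hsum_top : ∑ i ∈ Finset.Icc h' (k+1), (ε i)⁻¹
        = ∑ i ∈ Finset.Icc h' k, (ε i)⁻¹ + (ε (k+1))⁻¹ :=
      Finset.sum_Icc_succ_top (by omega) _
    have hak : X * Y * M / 24 ≤ a k := by
      have hsub : ∑ i ∈ Finset.Icc h' k, (ε i)⁻¹ ≤ ∑ i ∈ Finset.Icc 1 k, (ε i)⁻¹ :=
        Finset.sum_le_sum_of_subset_of_nonneg
          (Finset.Icc_subset_Icc_left hh1)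
          (fun i hi _ => (hεinvpos i (Finset.mem_Icc.mp hi).1).le)
      have hknn : (0:ℝ) ≤ (k:ℝ) := Nat.cast_nonneg k
      have hmid : X/3 * (M/4*Y) - X*Y ≤ ∑ i ∈ Finset.Icc h' k, (ε i)⁻¹ := by
        rw [hrX] at hsum_top
        linarith
      rw [ha k]
      nlinarith [mul_nonneg (mul_nonneg hX.le hY.le) (by linarith : (0:ℝ) ≤ M/24 - 1)]
    have hD : 0 < ((ε (k+1))⁻¹)^2 * Real.log ((ε (k+1))⁻¹) :=
      mul_pos (pow_pos (hεinvpos _ hm1) 2) ht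
    rw [le_div_iff₀ hD]
    have hEq : (24 * (g (k+1) * Real.log ((ε (k+1))⁻¹)))⁻¹
        * (((ε (k+1))⁻¹)^2 * Real.log ((ε (k+1))⁻¹)) = M * (X * Y) / 24 := by
      have key : ∀ (G T Mv : ℝ), G ≠ 0 → T ≠ 0 →
          (24 * (G * T))⁻¹ * ((Mv * G)^2 * T) = Mv * (Mv * G) / 24 := by
        intro G T Mv hG hT
        field_simp
      have hXY : M * g (k+1) = X * Y := by rw [← hrg, hrX]
      rw [show (((ε (k+1))⁻¹)^2 : ℝ) = (M * g (k+1))^2 by rw [hrg]]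
      rw [key _ _ _ (ne_of_gt hgm) (ne_of_gt ht), hXY]
    rw [hEq]
    linarith
  -- facts about c
  have hsum_nonneg : ∀ n : ℕ, 0 ≤ ∑ i ∈ Finset.Icc 1 n, (ε i)⁻¹ := fun n =>
    Finset.sum_nonneg fun i hi => (hεinvpos i (Finset.mem_Icc.mp hi).1).le
  have hane : ∀ n : ℕ, {i : ℕ | (n:ℝ) ≤ a i}.Nonempty := by
    intro n
    refine ⟨n, ?_⟩
    show (n:ℝ) ≤ a n
    rw [ha n]
    linarith [hsum_nonneg n]
  have hcale : ∀ n : ℕ, (n:ℝ) ≤ a (c n) := by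
    intro n
    rw [hc n]
    exact Nat.sInf_mem (hane n)
  have hc1 : ∀ n : ℕ, 1 ≤ n → 1 ≤ c n := by
    intro n hn
    by_contra hcon
    have hc0 : c n = 0 := by omega
    have hle := hcale n
    rw [hc0, ha 0] at hle
    have hemp : Finset.Icc 1 0 = (∅ : Finset ℕ) := rfl
    rw [hemp, Finset.sum_empty] at hle
    have h1' : (1:ℝ) ≤ (n:ℝ) := by exact_mod_cast hn
    norm_num at hle
    linarith
  have hclt : ∀ n : ℕ, 1 ≤ n → a (c n - 1) < n := by
    intro n hn
    have h1' := hc1 n hn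
    have hlt : c n - 1 < sInf {i : ℕ | (n:ℝ) ≤ a i} := by rw [← hc n]; omega
    have hnm := Nat.notMem_of_lt_sInf hlt
    simp only [Set.mem_setOf_eq] at hnm
    exact not_le.mp hnm
  have hamono : Monotone a := by
    intro x y hxy
    rw [ha x, ha y]
    have hsub : Finset.Icc 1 x ⊆ Finset.Icc 1 y := Finset.Icc_subset_Icc_right hxy
    have hss := Finset.sum_le_sum_of_subset_of_nonneg hsub
      (fun i hi _ => (hεinvpos i (Finset.mem_Icc.mp hi).1).le)
    have hxy' : (x:ℝ) ≤ y := by exact_mod_cast hxy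
    linarith
  have hctop : Tendsto c atTop atTop := by
    rw [tendsto_atTop]
    intro M'
    filter_upwards [eventually_ge_atTop (⌊a M'⌋₊ + 1)] with n hn
    by_contra hcon
    push_neg at hcon
    have h1' : a (c n) ≤ a M' := hamono (by omega)
    have h2' : (n:ℝ) ≤ a M' := le_trans (hcale n) h1'
    have h3' : ((⌊a M'⌋₊ + 1 : ℕ):ℝ) ≤ (n:ℝ) := by exact_mod_cast hn
    have h4' : a M' < (⌊a M'⌋₊:ℝ) + 1 := Nat.lt_floor_add_one _
    push_cast at h3'
    linarith
  constructor
  · -- first target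
    have hcomp := hB0.comp hctop
    apply tendsto_atTop_mono' atTop ?_ hcomp
    filter_upwards [eventually_ge_atTop 1, hctop.eventually (eventually_ge_atTop 1)]
      with n hn hcn
    simp only [Function.comp_apply]
    rw [hb n]
    have hD : 0 < ((ε (c n))⁻¹)^2 * Real.log ((ε (c n))⁻¹) :=
      mul_pos (pow_pos (hεinvpos _ hcn) 2) (hlogr _ hcn)
    exact (div_le_div_iff_of_pos_right hD).mpr (hclt n hn).le
  · -- second target
    have hcomp := hA.comp hctop
    apply tendsto_atTop_mono' atTop ?_ hcomp
    filter_upwards [eventually_ge_atTop 1, hctop.eventually (eventually_ge_atTop 1)]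
      with n hn hcn
    simp only [Function.comp_apply]
    rw [hb n]
    have hnpos : (0:ℝ) < n := by exact_mod_cast Nat.pos_of_ne_zero (by omega)
    have hlg := hlogr _ hcn
    have hden : (n:ℝ) * Real.log ((ε (c n))⁻¹) ≤ a (c n) * Real.log ((ε (c n))⁻¹) :=
      mul_le_mul_of_nonneg_right (hcale n) hlg.le
    have hdenpos : 0 < (n:ℝ) * Real.log ((ε (c n))⁻¹) := mul_pos hnpos hlg
    have hnum : (0:ℝ) ≤ ((c n : ℕ):ℝ)^2 := sq_nonneg _
    exact div_le_div_of_nonneg_left hnum hdenpos hden
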